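/- For every alphabet Σ, every w, k ∈ ℕ⁺, every (Σ,w)-ODD D of length k, and every natural number k' ≥ k, there exists a (Σ,w)-ODD D' of length k' such that L(D') = L(D). -/
import Mathlib


open FirstOrder

/-- A language (set of strings) is regular if it is recognized by a
deterministic finite automaton with finitely many states. -/
def LangRegular {β : Type} (L : Set (List β)) : Prop :=
  Language.IsRegular (L : Language β)

/-- A `(Σ,w)`-layer: left/right frontiers contained in `{0,…,w−1}`, a set of
transitions labelled by symbols of `Σ` or the padding symbol (`none`), sets of
initial and final states, and two boolean flags. -/
structure Layer (σ : Type) (w : ℕ) where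
  left : Set (Fin w)
  right : Set (Fin w)
  trans : Set (Fin w × Option σ × Fin w)
  initial : Set (Fin w)
  final : Set (Fin w)
  ini : Bool
  fin : Bool
  trans_mem : ∀ t ∈ trans, t.1 ∈ left ∧ t.2.2 ∈ right
  initial_sub : initial ⊆ left
  final_sub : final ⊆ right
  initial_empty : ini = false → initial = ∅
  final_empty : fin = false → final = ∅

instance {σ : Type} {w : ℕ} : Inhabited (Layer σ w) :=
  ⟨{ left := ∅, right := ∅, trans := ∅, initial := ∅, final := ∅,
     ini := false, fin := false,
     trans_mem := by simp, initial_sub := by simp, final_sub := by simp,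
     initial_empty := fun _ => rfl, final_empty := fun _ => rfl }⟩

/-- A string of layers is a `(Σ,w)`-ODD: it is non-empty, consecutive frontiers
match, the initial flag is set exactly on the first layer, and the final flag is
set exactly on the last layer. -/
def IsODD {σ : Type} {w : ℕ} (D : List (Layer σ w)) : Prop :=
  D ≠ [] ∧
  (∀ i : ℕ, (h : i + 1 < D.length) →
    (D[i + 1]'h).left = (D[i]'(by omega)).right) ∧
  (∀ i : ℕ, (h : i < D.length) →
    ((D[i]'h).ini = true ↔ i = 0) ∧ ((D[i]'h).fin = true ↔ i = D.length - 1))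

/-- Acceptance of a (non-empty) string `s` of length at most `|D|` by the ODD `D`:
there is a sequence of compatible transitions, reading the symbols of `s` followed
by padding symbols, from an initial state of the first layer to a final state of
the last layer. -/
def OddAccepts {σ : Type} {w : ℕ} (D : List (Layer σ w)) (s : List σ) : Prop :=
  s ≠ [] ∧ s.length ≤ D.length ∧
  ∃ st : ℕ → Fin w,
    (∀ i : ℕ, (h : i < D.length) → (st i, s[i]?, st (i + 1)) ∈ (D[i]'h).trans) ∧
    ∀ h : 0 < D.length,
      st 0 ∈ (D[0]'h).initial ∧ st D.length ∈ (D[D.length - 1]'(by omega)).final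

/-- The language of an ODD. -/
def OddLang {σ : Type} {w : ℕ} (D : List (Layer σ w)) : Set (List σ) :=
  { s | OddAccepts D s }

/-- Convolution (tensor product) of a family of strings over (possibly different)
alphabets: the string of length `max_i |u_i|` whose `j`-th symbol has `i`-th
component the `j`-th symbol of `u_i` if `j < |u_i|`, and the padding symbol `none`
otherwise. -/
def convD {a : ℕ} {α : Fin a → Type} (us : ∀ i, List (α i)) :
    List (∀ i, Option (α i)) :=
  List.ofFn fun j : Fin (Finset.univ.sup fun i => (us i).length) =>
    fun i => (us i)[(j : ℕ)]?

/-- A relation of tuples of strings is regular if its associated language, the set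
of convolutions of its tuples, is a regular language. -/
def RegularRelD {a : ℕ} {α : Fin a → Type} (R : Set (∀ i, List (α i))) : Prop :=
  LangRegular { x | ∃ us ∈ R, convD us = x }

/-- Convolution of a pair of strings over two alphabets. -/
def conv2 {α β : Type} (u : List α) (v : List β) : List (Option α × Option β) :=
  List.ofFn fun j : Fin (max u.length v.length) => (u[(j : ℕ)]?, v[(j : ℕ)]?)

/-- A binary relation of strings is regular if its associated language is regular. -/
def Regular2 {α β : Type} (R : Set (List α × List β)) : Prop :=
  LangRegular { x | ∃ p ∈ R, conv2 p.1 p.2 = x }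

/-- Convolution of an `(a+1)`-tuple of strings `(u, v₁, …, vₐ)` where `u` is over
the alphabet `α` and the `v`s over the alphabet `β`. -/
def conv1a {α β : Type} {a : ℕ} (u : List α) (vs : Fin a → List β) :
    List (Option α × (Fin a → Option β)) :=
  List.ofFn fun j : Fin (max u.length (Finset.univ.sup fun i => (vs i).length)) =>
    (u[(j : ℕ)]?, fun i => (vs i)[(j : ℕ)]?)

/-- An `(a+1)`-ary relation whose first coordinate is a string over `α` and whose
remaining `a` coordinates are strings over `β` is regular if its associated
language of convolutions is regular. -/
def Regular1a {α β : Type} {a : ℕ} (R : Set (List α × (Fin a → List β))) : Prop :=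
  LangRegular { x | ∃ p ∈ R, conv1a p.1 p.2 = x }

/-- The `a`-fold tensor product `L^{⊗a}` of a language `L`. -/
def tensorLang {σ : Type} {a : ℕ} (L : Set (List σ)) :
    Set (List (Fin a → Option σ)) :=
  { x | ∃ us : Fin a → List σ, (∀ i, us i ∈ L) ∧ convD us = x }

/-- The purely relational first-order vocabulary with `r` relation symbols of
arities `ar 0, …, ar (r-1)`. -/
def vocLang (r : ℕ) (ar : Fin r → ℕ) : FirstOrder.Language :=
  { Functions := fun _ => Empty, Relations := fun n => { i : Fin r // ar i = n } }

/-- A tuple `(D₀, D₁, …, Dᵣ)` is `(Σ,w,τ)`-structural: all ODDs have a common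
length, `D₀` is over `Σ`, `Dᵢ` is over `Σ^{⊗aᵢ}` (with padding components), and
`L(Dᵢ) ⊆ L(D₀)^{⊗aᵢ}`. -/
def IsStructural {σ : Type} {w r : ℕ} {ar : Fin r → ℕ}
    (D₀ : List (Layer σ w))
    (Ds : ∀ i : Fin r, List (Layer (Fin (ar i) → Option σ) w)) : Prop :=
  IsODD D₀ ∧
  ∀ i : Fin r, IsODD (Ds i) ∧ (Ds i).length = D₀.length ∧
    OddLang (Ds i) ⊆ tensorLang (OddLang D₀)

/-- The `τ`-structure derived from a structural tuple: its domain is `L(D₀)` and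
the `i`-th relation holds of `(u₁,…,u_{aᵢ})` iff `u₁⊗⋯⊗u_{aᵢ} ∈ L(Dᵢ)`. -/
def derivedStr {σ : Type} {w r : ℕ} {ar : Fin r → ℕ}
    (D₀ : List (Layer σ w))
    (Ds : ∀ i : Fin r, List (Layer (Fin (ar i) → Option σ) w)) :
    (vocLang r ar).Structure { s : List σ // s ∈ OddLang D₀ } where
  funMap := fun f _ => f.elim
  RelMap := fun {n} Rl x =>
    match Rl with
    | ⟨i, h⟩ =>
      convD (fun m : Fin (ar i) => (x (Fin.cast h m)).val) ∈ OddLang (Ds i)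

/-- The type of `(r+1)`-tuples of ODDs `(D₀, D₁, …, Dᵣ)`. -/
def StructTuple (σ : Type) (w r : ℕ) (ar : Fin r → ℕ) : Type :=
  List (Layer σ w) × ((i : Fin r) → List (Layer (Fin (ar i) → Option σ) w))

/-- Convolution of an `(r+1)`-tuple of ODDs. -/
def convTuple {σ : Type} {w r : ℕ} {ar : Fin r → ℕ} (q : StructTuple σ w r ar) :
    List (Option (Layer σ w) ×
      ((i : Fin r) → Option (Layer (Fin (ar i) → Option σ) w))) :=
  List.ofFn fun j : Fin (max q.1.length (Finset.univ.sup fun i => (q.2 i).length)) =>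
    (q.1[(j : ℕ)]?, fun i => (q.2 i)[(j : ℕ)]?)

/-- A set of `(r+1)`-tuples of ODDs is regular if its associated language of
convolutions is regular. -/
def RegularTuple {σ : Type} {w r : ℕ} {ar : Fin r → ℕ}
    (R : Set (StructTuple σ w r ar)) : Prop :=
  LangRegular { x | ∃ q ∈ R, convTuple q = x }

/-- The type of `(r+1+p)`-tuples `(D₀, D₁, …, Dᵣ, v₁, …, v_p)`. -/
def StructTupleV (σ : Type) (w r : ℕ) (ar : Fin r → ℕ) (p : ℕ) : Type :=
  StructTuple σ w r ar × (Fin p → List σ)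

/-- Convolution of an `(r+1+p)`-tuple `(D₀, D₁, …, Dᵣ, v₁, …, v_p)`. -/
def convStruct {σ : Type} {w r : ℕ} {ar : Fin r → ℕ} {p : ℕ}
    (q : StructTupleV σ w r ar p) :
    List ((Option (Layer σ w) ×
        ((i : Fin r) → Option (Layer (Fin (ar i) → Option σ) w))) ×
      (Fin p → Option σ)) :=
  List.ofFn fun j : Fin (max (max q.1.1.length
      (Finset.univ.sup fun i => (q.1.2 i).length))
      (Finset.univ.sup fun t => (q.2 t).length)) =>
    ((q.1.1[(j : ℕ)]?, fun i => (q.1.2 i)[(j : ℕ)]?), fun t => (q.2 t)[(j : ℕ)]?)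

/-- A set of `(r+1+p)`-tuples is regular if its associated language of
convolutions is regular. -/
def RegularStruct {σ : Type} {w r : ℕ} {ar : Fin r → ℕ} {p : ℕ}
    (R : Set (StructTupleV σ w r ar p)) : Prop :=
  LangRegular { x | ∃ q ∈ R, convStruct q = x }


private def padLayer {σ : Type} {w : ℕ} (R F : Set (Fin w)) (hF : F ⊆ R) : Layer σ w where
  left := R
  right := R
  trans := {t | t.1 ∈ F ∧ t.2.1 = none ∧ t.2.2 = t.1}
  initial := ∅
  final := F
  ini := false
  fin := true
  trans_mem := fun t ht => ⟨hF ht.1, ht.2.2 ▸ hF ht.1⟩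
  initial_sub := by simp
  final_sub := hF
  initial_empty := fun _ => rfl
  final_empty := by simp

private def unfinal {σ : Type} {w : ℕ} (L : Layer σ w) : Layer σ w where
  left := L.left
  right := L.right
  trans := L.trans
  initial := L.initial
  final := ∅
  ini := L.ini
  fin := false
  trans_mem := L.trans_mem
  initial_sub := L.initial_sub
  final_sub := by simp
  initial_empty := L.initial_empty
  final_empty := fun _ => rfl

lemma odd_step {σ : Type} {w : ℕ} (D : List (Layer σ w)) (hD : IsODD D) :
    ∃ D' : List (Layer σ w), IsODD D' ∧ D'.length = D.length + 1 ∧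
      OddLang D' = OddLang D := by
  obtain ⟨hne, hfr, hflag⟩ := hD
  have hk : 0 < D.length := List.length_pos_iff.mpr hne
  set k := D.length with hkdef
  set n := k - 1 with hndef
  have hn : n < k := by omega
  set L : Layer σ w := D[n]'(by omega) with hLdef
  set P : Layer σ w := padLayer L.right L.final L.final_sub with hPdef
  have hlen : (D.set n (unfinal L) ++ [P]).length = k + 1 := by simp [hkdef]
  have hget : ∀ (i : ℕ) (h : i < k),
      (D.set n (unfinal L) ++ [P])[i]'(by omega) =
        if n = i then unfinal L else D[i]'(by omega) := by
    intro i h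
    rw [List.getElem_append_left (by simp [hkdef]; omega), List.getElem_set]
  have hgetk : ∀ (i : ℕ) (h1 : i < k + 1), ¬ i < k →
      (D.set n (unfinal L) ++ [P])[i]'(by omega) = P := by
    intro i h1 h2
    rw [List.getElem_append_right (by simp [hkdef]; omega)]
    simp
  have htrans : ∀ (i : ℕ) (h : i < k),
      ((D.set n (unfinal L) ++ [P])[i]'(by omega)).trans = (D[i]'(by omega)).trans := by
    intro i h
    rw [hget i h]
    rcases eq_or_ne n i with h1 | h1
    · subst h1; rw [if_pos rfl]; rfl
    · rw [if_neg h1]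
  have hleft : ∀ (i : ℕ) (h : i < k),
      ((D.set n (unfinal L) ++ [P])[i]'(by omega)).left = (D[i]'(by omega)).left := by
    intro i h
    rw [hget i h]
    rcases eq_or_ne n i with h1 | h1
    · subst h1; rw [if_pos rfl]; rfl
    · rw [if_neg h1]
  have hright : ∀ (i : ℕ) (h : i < k),
      ((D.set n (unfinal L) ++ [P])[i]'(by omega)).right = (D[i]'(by omega)).right := by
    intro i h
    rw [hget i h]
    rcases eq_or_ne n i with h1 | h1
    · subst h1; rw [if_pos rfl]; rfl
    · rw [if_neg h1]
  have hinitial : ∀ (i : ℕ) (h : i < k),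
      ((D.set n (unfinal L) ++ [P])[i]'(by omega)).initial = (D[i]'(by omega)).initial := by
    intro i h
    rw [hget i h]
    rcases eq_or_ne n i with h1 | h1
    · subst h1; rw [if_pos rfl]; rfl
    · rw [if_neg h1]
  have hini : ∀ (i : ℕ) (h : i < k),
      ((D.set n (unfinal L) ++ [P])[i]'(by omega)).ini = (D[i]'(by omega)).ini := by
    intro i h
    rw [hget i h]
    rcases eq_or_ne n i with h1 | h1
    · subst h1; rw [if_pos rfl]; rfl
    · rw [if_neg h1]
  have hfin : ∀ (i : ℕ) (h : i < k),
      ((D.set n (unfinal L) ++ [P])[i]'(by omega)).fin = false := by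
    intro i h
    rw [hget i h]
    rcases eq_or_ne n i with h1 | h1
    · subst h1; rw [if_pos rfl]; rfl
    · rw [if_neg h1]
      rcases Bool.eq_false_or_eq_true (D[i]'(by omega)).fin with hb | hb
      · exact absurd ((hflag i (by omega)).2.mp hb) (by omega)
      · exact hb
  refine ⟨D.set n (unfinal L) ++ [P], ⟨by simp, ?_, ?_⟩, hlen, ?_⟩
  · -- frontiers
    intro i h
    have h' : i + 1 < k + 1 := by omega
    by_cases hik : i + 1 < k
    · rw [hleft (i + 1) hik, hright i (by omega)]
      exact hfr i (by omega)
    · obtain rfl : n = i := by omega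
      rw [hgetk (n + 1) h' hik, hright n hn]
      rfl
  · -- flags
    intro i h
    have h' : i < k + 1 := by omega
    simp only [hlen]
    by_cases hik : i < k
    · rw [hini i hik, hfin i hik]
      refine ⟨(hflag i (by omega)).1, ?_⟩
      simp
      omega
    · rw [hgetk i h' hik]
      constructor
      · simp [hPdef, padLayer]
        omega
      · simp [hPdef, padLayer]
        omega
  · -- language equality
    ext s
    simp only [OddLang, Set.mem_setOf_eq]
    constructor
    · rintro ⟨hs, hsl, st, htr, hif⟩
      have h1 : k < (D.set n (unfinal L) ++ [P]).length := by omega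
      have hPt := htr k h1
      rw [hgetk k (by omega) (by omega)] at hPt
      obtain ⟨hf, hnone, -⟩ := hPt
      have hslen : s.length ≤ k := by
        rw [List.getElem?_eq_none_iff] at hnone
        exact hnone
      refine ⟨hs, by omega, st, ?_, ?_⟩
      · intro i h
        have := htr i (by omega)
        rw [htrans i (by omega)] at this
        exact this
      · intro h0
        constructor
        · have := (hif (by omega)).1
          rw [hinitial 0 (by omega)] at this
          exact this
        · exact hf
    · rintro ⟨hs, hsl, st, htr, hif⟩
      refine ⟨hs, by omega, fun i => if i ≤ k then st i else st k, ?_, ?_⟩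
      · intro i h
        have h' : i < k + 1 := by omega
        by_cases hik : i < k
        · show ((if i ≤ k then st i else st k), s[i]?,
            (if i + 1 ≤ k then st (i + 1) else st k)) ∈ _
          rw [htrans i hik, if_pos (by omega : i ≤ k),
            if_pos (by omega : i + 1 ≤ k)]
          exact htr i (by omega)
        · rw [hgetk i h' hik]
          show ((if i ≤ k then st i else st k), s[i]?,
            (if i + 1 ≤ k then st (i + 1) else st k)) ∈ P.trans
          obtain rfl : i = k := by omega
          rw [if_pos (le_refl k), if_neg (by omega)]
          refine ⟨(hif hk).2, List.getElem?_eq_none (by omega), rfl⟩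
      · intro h0
        constructor
        · show (if (0 : ℕ) ≤ k then st 0 else st k) ∈ _
          rw [hinitial 0 (by omega), if_pos (Nat.zero_le k)]
          exact (hif hk).1
        · simp only [hlen]
          rw [hgetk (k + 1 - 1) (by omega) (by omega)]
          show (if k + 1 ≤ k then st (k + 1) else st k) ∈ P.final
          rw [if_neg (by omega)]
          exact (hif hk).2

/-- For every alphabet `Σ`, every `w, k ∈ ℕ⁺`, every `(Σ,w)`-ODD `D` of length `k`,
and every `k' ≥ k`, there exists a `(Σ,w)`-ODD `D'` of length `k'` with
`L(D') = L(D)`. -/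
theorem stmt0 (σ : Type) [Fintype σ] [Nonempty σ] (w k : ℕ) (hw : 0 < w) (hk : 0 < k)
    (D : List (Layer σ w)) (hD : IsODD D) (hDlen : D.length = k)
    (k' : ℕ) (hk' : k ≤ k') :
    ∃ D' : List (Layer σ w), IsODD D' ∧ D'.length = k' ∧ OddLang D' = OddLang D := by
  clear hw
  induction k', hk' using Nat.le_induction with
  | base => exact ⟨D, hD, hDlen, rfl⟩
  | succ m hm ih =>
    obtain ⟨E, hE, hElen, hEl⟩ := ih
    obtain ⟨E', h1, h2, h3⟩ := odd_step E hE
    exact ⟨E', h1, by omega, h3.trans hEl⟩
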